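/- Let (X, 𝒯) be an X3C instance with X = {x_1, …, x_{3m}} in which every element appears in exactly three sets and every set T ∈ 𝒯 has some T′ ∈ 𝒯 with T ∩ T′ = ∅. Construct the house allocation instance with: a project p_i (ℓ = u = 3) for each T_i ∈ 𝒯; a last-resort project p^− with ℓ = u = 6m − 1; for each x ∈ X an applicant a_x with preference list p_{i_1} ≻ p_{i_2} ≻ p_{i_3} ≻ p^−, where T_{i_1}, T_{i_2}, T_{i_3} are the three sets containing x; and 3m − 1 dummy applicants whose preference lists consist only of p^−. Then: (i) the matching assigning every applicant to p^− is popular if and only if (X, 𝒯) has no exact cover; and (ii) the constructed instance has a popular matching that opens exactly one project if and only if (X, 𝒯) has no exact cover. -/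

import Mathlib

open scoped Classical

/-- A house allocation instance with lower and upper quotas: applicants `A`,
projects `P`, acceptability `acc`, ranks `rk` (lower rank = more preferred),
and lower/upper quotas `lq`, `uq` for each project. -/
structure HA (A P : Type) where
  acc : A → P → Prop
  rk : A → P → ℕ
  lq : P → ℕ
  uq : P → ℕ

namespace HA

variable {A P : Type} [Fintype A] [Fintype P]

/-- `I.Prefers a o₁ o₂` : applicant `a` strictly prefers assignment `o₁` to `o₂`
(`none` = being unmatched; every acceptable project is preferred to being unmatched). -/
def Prefers (I : HA A P) (a : A) : Option P → Option P → Prop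
  | some p, some q => I.acc a p ∧ I.acc a q ∧ I.rk a p < I.rk a q
  | some p, none => I.acc a p
  | none, _ => False

/-- The set of applicants assigned to project `p` by `M`. -/
noncomputable def assigned (M : A → Option P) (p : P) : Finset A :=
  Finset.univ.filter fun a => M a = some p

/-- `M` is a feasible matching: applicants are only assigned acceptable projects, and
every project is either closed (no assignees) or open with a number of assignees
between its lower and upper quota. -/
def IsMatching (I : HA A P) (M : A → Option P) : Prop :=
  (∀ a p, M a = some p → I.acc a p) ∧
  ∀ p : P, (assigned M p).card = 0 ∨
    (I.lq p ≤ (assigned M p).card ∧ (assigned M p).card ≤ I.uq p)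

/-- `M'` is more popular than `M`. -/
def MorePopular (I : HA A P) (M' M : A → Option P) : Prop :=
  (Finset.univ.filter fun a => I.Prefers a (M a) (M' a)).card <
  (Finset.univ.filter fun a => I.Prefers a (M' a) (M a)).card

/-- A popular matching. -/
def Popular (I : HA A P) (M : A → Option P) : Prop :=
  I.IsMatching M ∧ ∀ M', I.IsMatching M' → ¬ I.MorePopular M' M

/-- `M'` dominates `M`: no applicant is worse off and some applicant is better off. -/
def Dominates (I : HA A P) (M' M : A → Option P) : Prop :=
  (∀ a, ¬ I.Prefers a (M a) (M' a)) ∧ ∃ a, I.Prefers a (M' a) (M a)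

/-- A Pareto optimal matching. -/
def ParetoOptimal (I : HA A P) (M : A → Option P) : Prop :=
  I.IsMatching M ∧ ∀ M', I.IsMatching M' → ¬ I.Dominates M' M

/-- A perfect matching: every applicant is matched. -/
def Perfect (M : A → Option P) : Prop := ∀ a, M a ≠ none

/-- The weight of matching `M` w.r.t. integer edge weights `w`. -/
noncomputable def weight (w : A → P → ℤ) (M : A → Option P) : ℤ :=
  ∑ a, (M a).elim 0 (w a)

/-- Project `p` is open under `M`. -/
def OpenProj (M : A → Option P) (p : P) : Prop := ∃ a, M a = some p

/-- The number of projects opened by `M`. -/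
noncomputable def opensCount (M : A → Option P) : ℕ :=
  (Finset.univ.filter fun p => OpenProj M p).card

/-- The number of projects closed by `M`. -/
noncomputable def closesCount (M : A → Option P) : ℕ :=
  (Finset.univ.filter fun p => ¬ OpenProj M p).card

/-- The preferences of every applicant form a strict order on her acceptable projects. -/
def Strict (I : HA A P) : Prop :=
  ∀ a p q, I.acc a p → I.acc a q → I.rk a p = I.rk a q → p = q

end HA

/-- An exact cover of the X3C instance `(X, T)`. -/
def ExactCover {m n : ℕ} (T : Fin n → Finset (Fin (3 * m))) : Prop :=
  ∃ S : Finset (Fin n), ∀ x : Fin (3 * m), ∃! i, i ∈ S ∧ x ∈ T i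

/-- The house allocation instance built from an X3C instance: one project per set
(quota exactly 3), a last-resort project `p⁻` with quota exactly `6m − 1`, one
applicant per element ranking the three sets containing it (in index order) above
`p⁻`, and `3m − 1` dummy applicants whose lists consist only of `p⁻`. -/
noncomputable def I13 {m n : ℕ} (T : Fin n → Finset (Fin (3 * m))) :
    HA (Fin (3 * m) ⊕ Fin (3 * m - 1)) (Fin n ⊕ Unit) where
  acc a p :=
    match a, p with
    | Sum.inl x, Sum.inl i => x ∈ T i
    | Sum.inl _, Sum.inr _ => True
    | Sum.inr _, Sum.inl _ => False
    | Sum.inr _, Sum.inr _ => True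
  rk a p :=
    match a, p with
    | Sum.inl x, Sum.inl i => (Finset.univ.filter fun i' => i' < i ∧ x ∈ T i').card
    | Sum.inl _, Sum.inr _ => 3
    | Sum.inr _, _ => 0
  lq p :=
    match p with
    | Sum.inl _ => 3
    | Sum.inr _ => 6 * m - 1
  uq p :=
    match p with
    | Sum.inl _ => 3
    | Sum.inr _ => 6 * m - 1

/-- The matching assigning every applicant to the last-resort project `p⁻`. -/
def M13 {m n : ℕ} (T : Fin n → Finset (Fin (3 * m))) :
    Fin (3 * m) ⊕ Fin (3 * m - 1) → Option (Fin n ⊕ Unit) :=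
  fun _ => some (Sum.inr ())

section Aux

open Finset

variable {m n : ℕ} (T : Fin n → Finset (Fin (3 * m)))

lemma prefers_irrefl {A P : Type} (I : HA A P) (a : A) (o : Option P) :
    ¬ I.Prefers a o o := by
  cases o <;> simp [HA.Prefers]

lemma cardA (hm : 0 < m) :
    Fintype.card (Fin (3 * m) ⊕ Fin (3 * m - 1)) = 6 * m - 1 := by
  simp [Fintype.card_sum]; omega

lemma filter_card_inl {P : (Fin (3 * m) ⊕ Fin (3 * m - 1)) → Prop}
    (h1 : ∀ x, P (Sum.inl x)) (h2 : ∀ y, ¬ P (Sum.inr y)) :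
    (Finset.univ.filter P).card = 3 * m := by
  have he : Finset.univ.filter P = Finset.univ.image Sum.inl := by
    ext a
    cases a with
    | inl x => simp [h1]
    | inr y => simp [h2]
  rw [he, Finset.card_image_of_injective _ Sum.inl_injective, card_univ,
    Fintype.card_fin]

lemma filter_card_inr {P : (Fin (3 * m) ⊕ Fin (3 * m - 1)) → Prop}
    (h1 : ∀ x, ¬ P (Sum.inl x)) (h2 : ∀ y, P (Sum.inr y)) :
    (Finset.univ.filter P).card = 3 * m - 1 := by
  have he : Finset.univ.filter P = Finset.univ.image Sum.inr := by
    ext a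
    cases a with
    | inl x => simp [h1]
    | inr y => simp [h2]
  rw [he, Finset.card_image_of_injective _ Sum.inr_injective, card_univ,
    Fintype.card_fin]

lemma rk_lt (hx3 : ∀ x : Fin (3 * m), (Finset.univ.filter fun i => x ∈ T i).card = 3)
    {x : Fin (3 * m)} {i : Fin n} (hxi : x ∈ T i) :
    (I13 T).rk (Sum.inl x) (Sum.inl i) < 3 := by
  have hsub : (Finset.univ.filter fun i' => i' < i ∧ x ∈ T i')
      ⊆ (Finset.univ.filter fun i' => x ∈ T i').erase i := by
    intro j hj
    simp only [mem_filter, mem_univ, true_and] at hj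
    exact Finset.mem_erase.2 ⟨ne_of_lt hj.1, by simp [hj.2]⟩
  have hle := Finset.card_le_card hsub
  have hcard : ((Finset.univ.filter fun i' => x ∈ T i').erase i).card = 2 := by
    rw [Finset.card_erase_of_mem (by simp [hxi]), hx3 x]
  show (Finset.univ.filter fun i' => i' < i ∧ x ∈ T i').card < 3
  omega

lemma M13_isMatching (hm : 0 < m) : (I13 T).IsMatching (M13 T) := by
  constructor
  · intro a p hp
    have : Sum.inr () = p := by simpa [M13] using hp
    subst this
    cases a <;> trivial
  · intro p
    cases p with
    | inl i =>
      left
      rw [Finset.card_eq_zero, Finset.eq_empty_iff_forall_notMem]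
      intro a ha
      simp [HA.assigned, M13] at ha
    | inr u =>
      right
      cases u
      have he : HA.assigned (M13 T) (Sum.inr ()) = Finset.univ := by
        ext a; simp [HA.assigned, M13]
      rw [he, card_univ, cardA hm]
      exact ⟨le_refl _, le_refl _⟩

lemma open_pminus (hm : 0 < m) {M : (Fin (3 * m) ⊕ Fin (3 * m - 1)) → Option (Fin n ⊕ Unit)}
    (hM : (I13 T).IsMatching M) (h : HA.OpenProj M (Sum.inr ())) : M = M13 T := by
  obtain ⟨a₀, ha₀⟩ := h
  have hne : (HA.assigned M (Sum.inr ())).card ≠ 0 := by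
    rw [← Nat.pos_iff_ne_zero]
    exact Finset.card_pos.2 ⟨a₀, by simp [HA.assigned, ha₀]⟩
  have hlq : 6 * m - 1 ≤ (HA.assigned M (Sum.inr ())).card := by
    rcases hM.2 (Sum.inr ()) with h | h
    · exact absurd h hne
    · exact h.1
  have hle : (HA.assigned M (Sum.inr ())).card ≤ 6 * m - 1 := by
    have := Finset.card_le_univ (HA.assigned M (Sum.inr ()))
    rwa [cardA hm] at this
  have huniv : HA.assigned M (Sum.inr ()) = Finset.univ :=
    Finset.eq_univ_of_card _ (by rw [cardA hm]; omega)
  funext a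
  have ha : a ∈ HA.assigned M (Sum.inr ()) := huniv ▸ Finset.mem_univ a
  simp only [HA.assigned, mem_filter] at ha
  exact ha.2

lemma assigned_open_eq (hT3 : ∀ i, (T i).card = 3)
    {M : (Fin (3 * m) ⊕ Fin (3 * m - 1)) → Option (Fin n ⊕ Unit)}
    (hM : (I13 T).IsMatching M) {j : Fin n} (hj : HA.OpenProj M (Sum.inl j)) :
    HA.assigned M (Sum.inl j) = (T j).image Sum.inl := by
  have hsub : HA.assigned M (Sum.inl j) ⊆ (T j).image Sum.inl := by
    intro a ha
    simp only [HA.assigned, mem_filter, mem_univ, true_and] at ha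
    have hacc := hM.1 a _ ha
    cases a with
    | inl x =>
      have hx : x ∈ T j := hacc
      exact Finset.mem_image_of_mem (Sum.inl : Fin (3 * m) → Fin (3 * m) ⊕ Fin (3 * m - 1)) hx
    | inr d => exact absurd hacc (fun h => h)
  have hcards : ((T j).image (Sum.inl : Fin (3 * m) → Fin (3 * m) ⊕ Fin (3 * m - 1))).card = 3 := by
    rw [Finset.card_image_of_injective _ Sum.inl_injective, hT3]
  have h3 : 3 ≤ (HA.assigned M (Sum.inl j)).card := by
    rcases hM.2 (Sum.inl j) with h | h
    · obtain ⟨a, ha⟩ := hj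
      exfalso
      rw [Finset.card_eq_zero] at h
      have hmem : a ∈ HA.assigned M (Sum.inl j) := by simp [HA.assigned, ha]
      rw [h] at hmem
      exact absurd hmem (Finset.notMem_empty a)
    · exact h.1
  exact Finset.eq_of_subset_of_card_le hsub (by omega)

end Aux
section Main

open Finset

variable {m n : ℕ} (T : Fin n → Finset (Fin (3 * m)))

lemma EC_morePop (hm : 0 < m) (hT3 : ∀ i, (T i).card = 3)
    (hx3 : ∀ x : Fin (3 * m), (Finset.univ.filter fun i => x ∈ T i).card = 3)
    (hEC : ExactCover T) :
    ∃ M', (I13 T).IsMatching M' ∧ (I13 T).MorePopular M' (M13 T) := by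
  obtain ⟨S, hS⟩ := hEC
  choose f hf using hS
  -- hf x : (f x ∈ S ∧ x ∈ T (f x)) ∧ ∀ j, (j ∈ S ∧ x ∈ T j) → j = f x
  refine ⟨Sum.elim (fun x => some (Sum.inl (f x))) (fun _ => none), ⟨?_, ?_⟩, ?_⟩
  · intro a p hp
    cases a with
    | inl x =>
      simp only [Sum.elim_inl, Option.some.injEq] at hp
      subst hp
      exact (hf x).1.2
    | inr d => simp at hp
  · intro p
    cases p with
    | inr u =>
      left
      rw [Finset.card_eq_zero, Finset.eq_empty_iff_forall_notMem]
      intro a ha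
      simp only [HA.assigned, mem_filter, mem_univ, true_and] at ha
      cases a with
      | inl x => simp at ha
      | inr d => simp at ha
    | inl i =>
      by_cases hu : ∃ x, f x = i
      · right
        obtain ⟨x₀, hx₀⟩ := hu
        have hiS : i ∈ S := hx₀ ▸ (hf x₀).1.1
        have he : HA.assigned (Sum.elim (fun x => some (Sum.inl (f x)))
            (fun _ => (none : Option (Fin n ⊕ Unit)))) (Sum.inl i)
            = (T i).image (Sum.inl : Fin (3 * m) → Fin (3 * m) ⊕ Fin (3 * m - 1)) := by
          ext a
          simp only [HA.assigned, mem_filter, mem_univ, true_and]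
          cases a with
          | inl x =>
            simp only [Sum.elim_inl, Option.some.injEq, Sum.inl.injEq, Finset.mem_image]
            constructor
            · intro hfx
              exact ⟨x, hfx ▸ (hf x).1.2, rfl⟩
            · rintro ⟨y, hy, hyx⟩
              cases hyx
              exact ((hf x).2 i ⟨hiS, hy⟩).symm
          | inr d => simp
        rw [he, Finset.card_image_of_injective _ Sum.inl_injective, hT3]
        exact ⟨le_refl _, le_refl _⟩
      · left
        rw [Finset.card_eq_zero, Finset.eq_empty_iff_forall_notMem]
        intro a ha
        simp only [HA.assigned, mem_filter, mem_univ, true_and] at ha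
        cases a with
        | inl x =>
          simp only [Sum.elim_inl, Option.some.injEq, Sum.inl.injEq] at ha
          exact hu ⟨x, ha⟩
        | inr d => simp at ha
  · show _ < _
    have hW : (Finset.univ.filter fun a => (I13 T).Prefers a (M13 T a)
        ((Sum.elim (fun x => some (Sum.inl (f x))) (fun _ => none)) a)).card = 3 * m - 1 := by
      apply filter_card_inr
      · intro x
        simp only [Sum.elim_inl, M13, HA.Prefers]
        rintro ⟨-, hx, hlt⟩
        have h3 : (I13 T).rk (Sum.inl x) (Sum.inr ()) = 3 := rfl
        have := rk_lt T hx3 (show x ∈ T (f x) from hx)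
        omega
      · intro y
        simp only [Sum.elim_inr, M13]
        show (I13 T).acc (Sum.inr y) (Sum.inr ())
        trivial
    have hI : (Finset.univ.filter fun a => (I13 T).Prefers a
        ((Sum.elim (fun x => some (Sum.inl (f x))) (fun _ => none)) a) (M13 T a)).card = 3 * m := by
      apply filter_card_inl
      · intro x
        simp only [Sum.elim_inl, M13]
        exact ⟨(hf x).1.2, trivial, rk_lt T hx3 (hf x).1.2⟩
      · intro y
        simp only [Sum.elim_inr, M13]
        exact fun h => h
    rw [hW, hI]
    omega

lemma morePop_EC (hm : 0 < m) (hT3 : ∀ i, (T i).card = 3)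
    (hx3 : ∀ x : Fin (3 * m), (Finset.univ.filter fun i => x ∈ T i).card = 3)
    {M' : (Fin (3 * m) ⊕ Fin (3 * m - 1)) → Option (Fin n ⊕ Unit)}
    (hM' : (I13 T).IsMatching M') (hmp : (I13 T).MorePopular M' (M13 T)) :
    ExactCover T := by
  by_cases hopen : HA.OpenProj M' (Sum.inr ())
  · rw [open_pminus T hm hM' hopen] at hmp
    exact absurd hmp (lt_irrefl _)
  · have hclosed : ∀ a, M' a ≠ some (Sum.inr ()) := fun a h => hopen ⟨a, h⟩
    have hWor : (Finset.univ.filter fun a => (I13 T).Prefers a (M13 T a) (M' a))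
        = Finset.univ.filter fun a => M' a = none := by
      ext a
      simp only [mem_filter, mem_univ, true_and]; simp only [M13]
      cases ha : M' a with
      | none =>
        simp only [HA.Prefers]
        cases a with
        | inl x => exact iff_of_true trivial trivial
        | inr d => exact iff_of_true trivial trivial
      | some p =>
        cases p with
        | inl i =>
          cases a with
          | inl x =>
            simp only [HA.Prefers]
            constructor
            · rintro ⟨-, hx, hlt⟩
              have h3 : (I13 T).rk (Sum.inl x) (Sum.inr ()) = 3 := rfl
              have := rk_lt T hx3 (show x ∈ T i from hx)
              omega
            · intro h; exact absurd h (by simp)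
          | inr d =>
            simp only [HA.Prefers]
            constructor
            · rintro ⟨-, hx, -⟩; exact absurd hx (fun h => h)
            · intro h; exact absurd h (by simp)
        | inr u =>
          cases u
          exact absurd ha (hclosed a)
    have hImp : (Finset.univ.filter fun a => (I13 T).Prefers a (M' a) (M13 T a))
        = Finset.univ.filter fun a => ∃ i, M' a = some (Sum.inl i) := by
      ext a
      simp only [mem_filter, mem_univ, true_and]; simp only [M13]
      cases ha : M' a with
      | none =>
        simp only [HA.Prefers]
        constructor
        · intro h; exact h.elim
        · rintro ⟨i, hi⟩; exact absurd hi (by simp)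
      | some p =>
        cases p with
        | inl i =>
          cases a with
          | inl x =>
            have hacc : x ∈ T i := hM'.1 _ _ ha
            simp only [HA.Prefers]
            exact iff_of_true ⟨hacc, trivial, rk_lt T hx3 hacc⟩ ⟨i, rfl⟩
          | inr d => exact absurd (hM'.1 _ _ ha) (fun h => h)
        | inr u =>
          cases u
          exact absurd ha (hclosed a)
    simp only [HA.MorePopular] at hmp
    rw [hWor, hImp] at hmp
    have hsplit : (Finset.univ.filter fun a => ∃ i, M' a = some (Sum.inl i)).card
        + (Finset.univ.filter fun a => M' a = none).card = 6 * m - 1 := by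
      have he : (Finset.univ.filter fun a => M' a = none)
          = Finset.univ.filter fun a => ¬ ∃ i, M' a = some (Sum.inl i) := by
        ext a
        simp only [mem_filter, mem_univ, true_and]
        cases ha : M' a with
        | none => simp
        | some p =>
          cases p with
          | inl i => simp
          | inr u =>
            cases u
            exact absurd ha (hclosed a)
      rw [he, Finset.card_filter_add_card_filter_not, card_univ, cardA hm]
    have hImple : (Finset.univ.filter fun a => ∃ i, M' a = some (Sum.inl i))
        ⊆ Finset.univ.image Sum.inl := by
      intro a ha
      simp only [mem_filter, mem_univ, true_and] at ha
      obtain ⟨i, hi⟩ := ha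
      cases a with
      | inl x => simp
      | inr d => exact absurd (hM'.1 _ _ hi) (fun h => h)
    have himgcard : (Finset.univ.image (Sum.inl :
        Fin (3 * m) → Fin (3 * m) ⊕ Fin (3 * m - 1))).card = 3 * m := by
      rw [Finset.card_image_of_injective _ Sum.inl_injective, card_univ, Fintype.card_fin]
    have hle := Finset.card_le_card hImple
    have heq : (Finset.univ.filter fun a => ∃ i, M' a = some (Sum.inl i))
        = Finset.univ.image Sum.inl :=
      Finset.eq_of_subset_of_card_le hImple (by omega)
    have hall : ∀ x : Fin (3 * m), ∃ i, M' (Sum.inl x) = some (Sum.inl i) := by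
      intro x
      have hmem : (Sum.inl x : Fin (3 * m) ⊕ Fin (3 * m - 1))
          ∈ Finset.univ.filter fun a => ∃ i, M' a = some (Sum.inl i) := by
        rw [heq]; simp
      simpa using hmem
    refine ⟨Finset.univ.filter fun i => HA.OpenProj M' (Sum.inl i), ?_⟩
    intro x
    obtain ⟨i, hi⟩ := hall x
    have hacc : x ∈ T i := hM'.1 _ _ hi
    refine ⟨i, ⟨by simp only [mem_filter, mem_univ, true_and]; exact ⟨_, hi⟩, hacc⟩, ?_⟩
    rintro j ⟨hjS, hjT⟩
    simp only [mem_filter, mem_univ, true_and] at hjS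
    have hassigned := assigned_open_eq T hT3 hM' hjS
    have hmem : Sum.inl x ∈ HA.assigned M' (Sum.inl j) := by
      rw [hassigned]
      exact Finset.mem_image_of_mem _ hjT
    simp only [HA.assigned, mem_filter, mem_univ, true_and] at hmem
    rw [hi] at hmem
    simpa using hmem.symm

end Main
section Fin13

open Finset

variable {m n : ℕ} (T : Fin n → Finset (Fin (3 * m)))

lemma single_set_open (hT3 : ∀ i, (T i).card = 3)
    (hdisj : ∀ i, ∃ j, T i ∩ T j = ∅)
    {M : (Fin (3 * m) ⊕ Fin (3 * m - 1)) → Option (Fin n ⊕ Unit)}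
    (hpop : (I13 T).Popular M) {i : Fin n}
    (hiopen : HA.OpenProj M (Sum.inl i))
    (huniq : ∀ p, HA.OpenProj M p → p = Sum.inl i) : False := by
  obtain ⟨j, hj⟩ := hdisj i
  have hji : j ≠ i := by
    rintro rfl
    have := hT3 j
    rw [Finset.inter_self] at hj
    rw [hj] at this
    simp at this
  have hjclosed : ¬ HA.OpenProj M (Sum.inl j) := by
    intro h
    exact hji (Sum.inl_injective (huniq _ h))
  have hTjnone : ∀ x ∈ T j, M (Sum.inl x) = none := by
    intro x hx
    cases hMx : M (Sum.inl x) with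
    | none => rfl
    | some p =>
      have hpo : HA.OpenProj M p := ⟨_, hMx⟩
      have hpi := huniq p hpo
      subst hpi
      have hacc : x ∈ T i := hpop.1.1 _ _ hMx
      have hmem : x ∈ T i ∩ T j := Finset.mem_inter.2 ⟨hacc, hx⟩
      rw [hj] at hmem
      exact absurd hmem (Finset.notMem_empty x)
  set M'' : (Fin (3 * m) ⊕ Fin (3 * m - 1)) → Option (Fin n ⊕ Unit) :=
    Sum.elim (fun x => if x ∈ T j then some (Sum.inl j) else M (Sum.inl x))
      (fun d => M (Sum.inr d)) with hM''
  have hM''match : (I13 T).IsMatching M'' := by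
    constructor
    · intro a p hp
      cases a with
      | inl x =>
        simp only [hM'', Sum.elim_inl] at hp
        by_cases hx : x ∈ T j
        · rw [if_pos hx] at hp
          cases hp
          exact hx
        · rw [if_neg hx] at hp
          exact hpop.1.1 _ _ hp
      | inr d =>
        simp only [hM'', Sum.elim_inr] at hp
        exact hpop.1.1 _ _ hp
    · intro p
      by_cases hp : p = Sum.inl j
      · subst hp
        right
        have he : HA.assigned M'' (Sum.inl j)
            = (T j).image (Sum.inl : Fin (3 * m) → Fin (3 * m) ⊕ Fin (3 * m - 1)) := by
          ext a
          simp only [HA.assigned, mem_filter, mem_univ, true_and]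
          cases a with
          | inl x =>
            simp only [hM'', Sum.elim_inl, Finset.mem_image]
            by_cases hx : x ∈ T j
            · rw [if_pos hx]
              exact iff_of_true rfl ⟨x, hx, rfl⟩
            · rw [if_neg hx]
              constructor
              · intro h
                exact absurd (⟨_, h⟩ : HA.OpenProj M (Sum.inl j)) hjclosed
              · rintro ⟨y, hy, hyx⟩
                cases hyx
                exact absurd hy hx
          | inr d =>
            simp only [hM'', Sum.elim_inr, Finset.mem_image]
            constructor
            · intro h
              exact absurd (⟨_, h⟩ : HA.OpenProj M (Sum.inl j)) hjclosed
            · rintro ⟨y, hy, hyx⟩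
              exact absurd hyx (by simp)
        rw [he, Finset.card_image_of_injective _ Sum.inl_injective, hT3]
        exact ⟨le_refl _, le_refl _⟩
      · have he : HA.assigned M'' p = HA.assigned M p := by
          ext a
          simp only [HA.assigned, mem_filter, mem_univ, true_and]
          cases a with
          | inl x =>
            simp only [hM'', Sum.elim_inl]
            by_cases hx : x ∈ T j
            · rw [if_pos hx]
              constructor
              · intro h
                cases h
                exact absurd rfl hp
              · intro h
                rw [hTjnone x hx] at h
                exact absurd h (by simp)
            · rw [if_neg hx]
          | inr d => simp only [hM'', Sum.elim_inr]
        rw [he]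
        exact hpop.1.2 p
  have hWor : (Finset.univ.filter fun a => (I13 T).Prefers a (M a) (M'' a)) = ∅ := by
    rw [Finset.eq_empty_iff_forall_notMem]
    intro a ha
    simp only [mem_filter, mem_univ, true_and] at ha
    cases a with
    | inl x =>
      by_cases hx : x ∈ T j
      · rw [hTjnone x hx] at ha
        exact ha
      · have he : M'' (Sum.inl x) = M (Sum.inl x) := by
          simp only [hM'', Sum.elim_inl, if_neg hx]
        rw [he] at ha
        exact prefers_irrefl _ _ _ ha
    | inr d =>
      have he : M'' (Sum.inr d) = M (Sum.inr d) := by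
        simp only [hM'', Sum.elim_inr]
      rw [he] at ha
      exact prefers_irrefl _ _ _ ha
  obtain ⟨x, hxj⟩ : ∃ x, x ∈ T j := by
    have hpos : 0 < (T j).card := by rw [hT3]; norm_num
    obtain ⟨x, hx⟩ := Finset.card_pos.mp hpos
    exact ⟨x, hx⟩
  have himp : (Sum.inl x : Fin (3 * m) ⊕ Fin (3 * m - 1))
      ∈ Finset.univ.filter fun a => (I13 T).Prefers a (M'' a) (M a) := by
    simp only [mem_filter, mem_univ, true_and]
    have h1 : M'' (Sum.inl x) = some (Sum.inl j) := by
      simp only [hM'', Sum.elim_inl, if_pos hxj]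
    rw [h1, hTjnone x hxj]
    exact hxj
  have hmp : (I13 T).MorePopular M'' M := by
    show _ < _
    rw [hWor]
    simp only [card_empty]
    exact Finset.card_pos.mpr ⟨_, himp⟩
  exact hpop.2 M'' hM''match hmp

end Fin13

/-- Theorem: (i) the all-to-`p⁻` matching is popular iff the X3C instance has no
exact cover, and (ii) the constructed instance has a popular matching opening exactly
one project iff the X3C instance has no exact cover. -/
theorem stmt_13 (m n : ℕ) (hm : 0 < m) (T : Fin n → Finset (Fin (3 * m)))
    (hT3 : ∀ i, (T i).card = 3)
    (hx3 : ∀ x : Fin (3 * m), (Finset.univ.filter fun i => x ∈ T i).card = 3)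
    (hdisj : ∀ i, ∃ j, T i ∩ T j = ∅) :
    ((I13 T).Popular (M13 T) ↔ ¬ ExactCover T) ∧
    ((∃ M, (I13 T).Popular M ∧ HA.opensCount M = 1) ↔ ¬ ExactCover T) := by
  have hbwd : ¬ ExactCover T → (I13 T).Popular (M13 T) := by
    intro hEC
    exact ⟨M13_isMatching T hm, fun M' hM' hmp => hEC (morePop_EC T hm hT3 hx3 hM' hmp)⟩
  have hfwd : (I13 T).Popular (M13 T) → ¬ ExactCover T := by
    intro hpop hEC
    obtain ⟨M', hM', hmp⟩ := EC_morePop T hm hT3 hx3 hEC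
    exact hpop.2 M' hM' hmp
  refine ⟨⟨hfwd, hbwd⟩, ?_, ?_⟩
  · rintro ⟨M, hpop, hone⟩
    rw [HA.opensCount, Finset.card_eq_one] at hone
    obtain ⟨p, hp⟩ := hone
    have hpopen : HA.OpenProj M p := by
      have hmem : p ∈ Finset.univ.filter fun q => HA.OpenProj M q := by
        rw [hp]; exact Finset.mem_singleton_self p
      simpa using hmem
    have huniq : ∀ q, HA.OpenProj M q → q = p := by
      intro q hq
      have hmem : q ∈ Finset.univ.filter fun q => HA.OpenProj M q := by simpa using hq
      rw [hp] at hmem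
      simpa using hmem
    cases p with
    | inl i => exact (single_set_open T hT3 hdisj hpop hpopen huniq).elim
    | inr u =>
      cases u
      have hM13 := open_pminus T hm hpop.1 hpopen
      rw [hM13] at hpop
      exact hfwd hpop
  · intro hEC
    refine ⟨M13 T, hbwd hEC, ?_⟩
    have he : (Finset.univ.filter fun p => HA.OpenProj (M13 T) p)
        = {(Sum.inr () : Fin n ⊕ Unit)} := by
      ext p
      simp only [Finset.mem_filter, Finset.mem_univ, true_and, Finset.mem_singleton]
      cases p with
      | inl i =>
        constructor
        · rintro ⟨a, ha⟩
          exact absurd ha (by simp [M13])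
        · intro h
          exact absurd h (by simp)
      | inr u =>
        cases u
        exact iff_of_true ⟨Sum.inl ⟨0, by omega⟩, rfl⟩ rfl
    rw [HA.opensCount, he, Finset.card_singleton]
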